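/- Let s : ℕ → ℕ be any sequence (to be thought of as the number of S-structures on an m-element set, for a species S). For each n ≥ 0 define a(n) = s(0) · Σ_{f parking function on [n]} ∏_{i=1}^{n} s(m_i), where m_i = #f^{-1}(i) (so a(0) = s(0)). Let A(t) = Σ_{n≥0} a(n)·t^n/n! and S(t) = Σ_{m≥0} s(m)·t^m/m! in ℚ[[t]]. Then A(t) = S(t·A(t)), i.e., A equals the substitution of the power series t·A(t) (which has zero constant term) into S. -/

import Mathlib

open PowerSeries

/-- A parking function on `[n] = {1, …, n}` (modeled by `Fin n`, with `i : Fin n`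
representing the value `i + 1`). -/
def IsParkingFunction (n : ℕ) (f : Fin n → Fin n) : Prop :=
  ∀ k ∈ Finset.Icc 1 n, k ≤ (Finset.univ.filter fun i => (f i : ℕ) + 1 ≤ k).card

instance (n : ℕ) : DecidablePred (IsParkingFunction n) := fun f => by
  unfold IsParkingFunction; infer_instance

/-- `m_i = #f⁻¹(i)`, the size of the fiber of `f` over `i`. -/
def fiberCard (n : ℕ) (f : Fin n → Fin n) (i : Fin n) : ℕ :=
  (Finset.univ.filter fun j => f j = i).card

/-- `a(n) = s(0) · Σ_{f parking function on [n]} Π_i s(m_i)`, the number of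
parking-like structures over a species with `s m` structures on an `m`-set. -/
def aCount (s : ℕ → ℕ) (n : ℕ) : ℕ :=
  s 0 * ∑ f : {f : Fin n → Fin n // IsParkingFunction n f},
    ∏ i : Fin n, s (fiberCard n f.1 i)

/-- Composition `F(g)` of formal power series, valid (i.e., agreeing with the usual
substitution) whenever the constant term of `g` is zero. -/
noncomputable def seriesComp (F g : PowerSeries ℚ) : PowerSeries ℚ :=
  PowerSeries.mk fun n =>
    PowerSeries.coeff (R := ℚ) n (∑ k ∈ Finset.range (n + 1), PowerSeries.coeff (R := ℚ) k F • g ^ k)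

namespace PL
open Finset

lemma coeff_seriesComp (F g : ℚ⟦X⟧) (n : ℕ) :
    coeff n (seriesComp F g) = ∑ k ∈ range (n+1), coeff k F * coeff n (g ^ k) := by
  simp [seriesComp, smul_eq_mul]

lemma coeff_pow_eq_zero {g : ℚ⟦X⟧} (hg : constantCoeff g = 0) {n k : ℕ} (h : n < k) :
    coeff n (g ^ k) = 0 := by
  rw [coeff_pow]
  apply sum_eq_zero; intro l hl
  rw [mem_finsuppAntidiag] at hl
  have hex : ∃ i ∈ range k, l i = 0 := by
    by_contra hc; push_neg at hc
    have h1 : k ≤ ∑ i ∈ range k, l i := by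
      calc k = ∑ _i ∈ range k, 1 := by simp
      _ ≤ _ := sum_le_sum fun i hi => Nat.one_le_iff_ne_zero.2 (hc i hi)
    have h2 : ∑ i ∈ range k, l i = n := hl.1
    omega
  obtain ⟨i, hi, hi0⟩ := hex
  apply prod_eq_zero hi
  rw [hi0]
  simpa using hg

lemma coeff_seriesComp_ge (F g : ℚ⟦X⟧) (hg : constantCoeff g = 0) {n N : ℕ} (h : n < N) :
    coeff n (seriesComp F g) = ∑ k ∈ range N, coeff k F * coeff n (g ^ k) := by
  rw [coeff_seriesComp]
  apply sum_subset (range_subset_range.2 h)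
  intro k _ hk
  rw [mem_range, not_lt] at hk
  rw [coeff_pow_eq_zero hg (by omega), mul_zero]

lemma seriesComp_mul (F G g : ℚ⟦X⟧) (hg : constantCoeff g = 0) :
    seriesComp (F * G) g = seriesComp F g * seriesComp G g := by
  ext n
  rw [coeff_seriesComp, coeff_mul]
  have hR : ∑ x ∈ antidiagonal n, coeff x.1 (seriesComp F g) * coeff x.2 (seriesComp G g)
      = ∑ a ∈ range (n+1), ∑ b ∈ range (n+1), coeff a F * coeff b G * coeff n (g ^ (a+b)) := by
    have e1 : ∀ x ∈ antidiagonal n,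
        coeff x.1 (seriesComp F g) * coeff x.2 (seriesComp G g)
        = ∑ a ∈ range (n+1), ∑ b ∈ range (n+1),
            (coeff a F * coeff x.1 (g^a)) * (coeff b G * coeff x.2 (g^b)) := by
      intro x hx
      rw [HasAntidiagonal.mem_antidiagonal] at hx
      rw [coeff_seriesComp_ge F g hg (N := n+1) (by omega),
        coeff_seriesComp_ge G g hg (N := n+1) (by omega), sum_mul_sum]
    rw [sum_congr rfl e1, sum_comm]
    apply sum_congr rfl; intro a _
    rw [sum_comm]
    apply sum_congr rfl; intro b _
    rw [pow_add, coeff_mul, mul_sum]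
    exact sum_congr rfl fun x _ => by ring
  rw [hR]
  have hdisj : (↑(range (n+1)) : Set ℕ).PairwiseDisjoint (fun k => antidiagonal k) := by
    intro k1 _ k2 _ hne
    simp only [Function.onFun, disjoint_left]
    intro a ha hb
    rw [HasAntidiagonal.mem_antidiagonal] at ha hb
    exact hne (by omega)
  have hL : ∑ k ∈ range (n+1), coeff k (F*G) * coeff n (g^k)
      = ∑ x ∈ (range (n+1)).biUnion (fun k => antidiagonal k),
          coeff x.1 F * coeff x.2 G * coeff n (g ^ (x.1 + x.2)) := by
    rw [sum_biUnion hdisj]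
    apply sum_congr rfl; intro k hk
    rw [coeff_mul, sum_mul]
    apply sum_congr rfl; intro x hx
    rw [HasAntidiagonal.mem_antidiagonal] at hx
    rw [hx]
  rw [hL, ← sum_product' (s := range (n+1)) (t := range (n+1))
      (f := fun a b => coeff a F * coeff b G * coeff n (g ^ (a+b)))]
  apply sum_subset
  · intro x hx
    simp only [mem_biUnion, mem_range] at hx
    obtain ⟨k, hk, hx⟩ := hx
    rw [HasAntidiagonal.mem_antidiagonal] at hx
    simp only [mem_product, mem_range]
    omega
  · intro x hx hnx
    simp only [mem_product, mem_range] at hx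
    have hgt : n < x.1 + x.2 := by
      by_contra hle
      push_neg at hle
      exact hnx (mem_biUnion.2 ⟨x.1 + x.2, mem_range.2 (by omega), HasAntidiagonal.mem_antidiagonal.2 rfl⟩)
    rw [coeff_pow_eq_zero hg hgt, mul_zero]


lemma seriesComp_one (g : ℚ⟦X⟧) : seriesComp 1 g = 1 := by
  ext n
  rw [coeff_seriesComp]
  rcases Nat.eq_zero_or_pos n with h | h
  · subst h; simp
  · rw [Finset.sum_eq_single 0]
    · simp [coeff_one, Nat.pos_iff_ne_zero.1 h]
    · intro k _ hk
      rw [coeff_one, if_neg hk, zero_mul]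
    · simp
lemma seriesComp_pow (F g : ℚ⟦X⟧) (hg : constantCoeff g = 0) (k : ℕ) :
    seriesComp (F ^ k) g = (seriesComp F g) ^ k := by
  induction k with
  | zero => simpa using seriesComp_one g
  | succ k ih => rw [pow_succ, pow_succ, seriesComp_mul _ _ _ hg, ih]

/-- coefficients of `X * f` -/
lemma coeff_X_mul' (f : ℚ⟦X⟧) (n : ℕ) :
    coeff n (X * f) = if n = 0 then 0 else coeff (n-1) f := by
  cases n with
  | zero => simp
  | succ n => simp [coeff_succ_X_mul]

/-- powers of `X * ·` only depend on lower coefficients -/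
lemma coeff_pow_congr_below {U V : ℚ⟦X⟧} {n : ℕ}
    (h : ∀ j < n, coeff j U = coeff j V) (k : ℕ) :
    coeff n ((X * U) ^ k) = coeff n ((X * V) ^ k) := by
  rcases Nat.eq_zero_or_pos k with hk | hk
  · subst hk; simp
  rw [coeff_pow, coeff_pow]
  apply sum_congr rfl
  intro l hl
  rw [mem_finsuppAntidiag] at hl
  apply prod_congr rfl
  intro i hi
  rw [coeff_X_mul', coeff_X_mul']
  rcases Nat.eq_zero_or_pos (l i) with h0 | h0
  · simp [h0]
  · have hle : l i ≤ n := hl.1 ▸ single_le_sum (f := fun i => l i) (fun _ _ => Nat.zero_le _) hi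
    rw [if_neg (by omega), if_neg (by omega), h _ (by omega)]

noncomputable def tcoef (S : ℚ⟦X⟧) : ℕ → ℚ
  | n => ∑ k ∈ Finset.range (n+1), (PowerSeries.coeff k S) *
      PowerSeries.coeff n ((PowerSeries.X *
        PowerSeries.mk (fun j => if _ : j < n then tcoef S j else 0)) ^ k)
  termination_by n => n
  decreasing_by exact ‹_›

lemma Tfun_eq (S : ℚ⟦X⟧) :
    PowerSeries.mk (tcoef S) = seriesComp S (X * PowerSeries.mk (tcoef S)) := by
  ext n
  rw [coeff_mk, coeff_seriesComp, tcoef]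
  apply sum_congr rfl
  intro k _
  congr 1
  apply coeff_pow_congr_below
  intro j hj
  simp [coeff_mk, hj]

lemma Dsum (F G : ℚ⟦X⟧) {N : ℕ} (hN : 1 ≤ N) :
    ∑ m ∈ range (N+1), (m:ℚ) * coeff m F * coeff (N-m) G
      = coeff (N-1) ((d⁄dX ℚ F) * G) := by
  rw [coeff_mul, Finset.Nat.sum_antidiagonal_eq_sum_range_succ_mk]
  have hN1 : N - 1 + 1 = N := by omega
  simp only [Nat.succ_eq_add_one, hN1]
  rw [sum_range_succ']
  simp only [Nat.cast_zero, zero_mul, add_zero]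
  apply sum_congr rfl
  intro p _
  rw [coeff_derivative]
  have h1 : N - (p+1) = N - 1 - p := by omega
  rw [h1]
  push_cast
  ring

lemma deriv_pow (S : ℚ⟦X⟧) : ∀ k : ℕ, d⁄dX ℚ (S^(k+1)) = C ((k:ℚ)+1) * S^k * d⁄dX ℚ S := by
  intro k
  induction k with
  | zero => simp
  | succ k IH =>
    rw [pow_succ, Derivation.leibniz, smul_eq_mul, smul_eq_mul, IH]
    have hC : C ((k:ℚ)+1+1) = C ((k:ℚ)+1) + 1 := by rw [map_add, map_one]
    push_cast
    rw [hC]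
    ring

lemma Dpow (S : ℚ⟦X⟧) {k N : ℕ} (hk : 1 ≤ k) :
    C ((N:ℚ) + k) * ((d⁄dX ℚ (S^k)) * S^N) = C (k:ℚ) * d⁄dX ℚ (S^(N+k)) := by
  obtain ⟨k', rfl⟩ : ∃ k', k = k' + 1 := ⟨k - 1, by omega⟩
  have h2 : N + (k' + 1) = (N + k') + 1 := by omega
  rw [h2, deriv_pow, deriv_pow]
  have h3 : S ^ k' * S ^ N = S ^ (N + k') := by rw [← pow_add]; congr 1; omega
  have h4 : C (((k':ℚ))+1) = C (((k'+1:ℕ):ℚ)) := by push_cast; ring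
  have h5 : C (((N+k':ℕ):ℚ)+1) = C ((N:ℚ) + ((k'+1:ℕ):ℚ)) := by push_cast; ring_nf
  calc C ((N:ℚ) + ((k'+1:ℕ):ℚ)) * (C ((k':ℚ)+1) * S ^ k' * d⁄dX ℚ S * S ^ N)
      = C ((N:ℚ) + ((k'+1:ℕ):ℚ)) * C ((k':ℚ)+1) * (S ^ k' * S ^ N) * d⁄dX ℚ S := by ring
  _ = C ((N:ℚ) + ((k'+1:ℕ):ℚ)) * C ((k':ℚ)+1) * S ^ (N+k') * d⁄dX ℚ S := by rw [h3]
  _ = C (((k'+1:ℕ):ℚ)) * (C (((N+k':ℕ):ℚ)+1) * S ^ (N + k') * d⁄dX ℚ S) := by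
        rw [h4, h5]; ring

lemma coeff_B_pow (S : ℚ⟦X⟧) : ∀ n, ∀ k, 1 ≤ k → k ≤ n →
    coeff n ((X * PowerSeries.mk (tcoef S)) ^ k)
      = (k : ℚ)/n * coeff (n-k) (S^n) := by
  intro n
  induction n using Nat.strong_induction_on with
  | _ n IH =>
  intro k hk1 hkn
  have hc0 : constantCoeff (X * PowerSeries.mk (tcoef S)) = 0 := by simp
  have hB : X * PowerSeries.mk (tcoef S)
      = X * seriesComp S (X * PowerSeries.mk (tcoef S)) := by
    conv_lhs => rw [Tfun_eq S]
  have hBk : (X * PowerSeries.mk (tcoef S)) ^ k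
      = X ^ k * seriesComp (S^k) (X * PowerSeries.mk (tcoef S)) := by
    calc (X * PowerSeries.mk (tcoef S)) ^ k
        = (X * seriesComp S (X * PowerSeries.mk (tcoef S))) ^ k := by rw [← hB]
    _ = X ^ k * (seriesComp S (X * PowerSeries.mk (tcoef S))) ^ k := mul_pow _ _ _
    _ = X ^ k * seriesComp (S^k) (X * PowerSeries.mk (tcoef S)) := by
        rw [seriesComp_pow _ _ hc0]
  rw [hBk, coeff_X_pow_mul', if_pos hkn, coeff_seriesComp]
  have hn0 : (n:ℚ) ≠ 0 := Nat.cast_ne_zero.mpr (by omega)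
  rcases Nat.eq_zero_or_pos (n - k) with hN0 | hN1
  · -- k = n
    have hkn' : k = n := by omega
    rw [hN0, range_one, sum_singleton, pow_zero]
    simp only [map_one, coeff_zero_eq_constantCoeff, mul_one]
    rw [hkn', div_self hn0, one_mul]
  · -- N := n - k ≥ 1
    have hNne : ((n-k:ℕ):ℚ) ≠ 0 := Nat.cast_ne_zero.mpr (by omega)
    have hstep : ∀ m ∈ range ((n-k)+1),
        coeff m (S^k) * coeff (n-k) ((X * PowerSeries.mk (tcoef S))^m)
          = (1/((n-k:ℕ):ℚ)) * ((m:ℚ) * coeff m (S^k) * coeff ((n-k)-m) (S^(n-k))) := by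
      intro m hm
      rw [mem_range] at hm
      rcases Nat.eq_zero_or_pos m with hm0 | hm1
      · subst hm0
        rw [pow_zero, coeff_one, if_neg (by omega : ¬ (n-k) = 0)]
        simp
      · rw [IH (n-k) (by omega) m hm1 (by omega)]
        field_simp
    rw [sum_congr rfl hstep, ← mul_sum, Dsum _ _ hN1]
    have hNk : (n-k) + k = n := by omega
    have hD := congrArg (fun f => coeff ((n-k)-1) f) (Dpow S (k := k) (N := n-k) hk1)
    simp only [coeff_C_mul] at hD
    rw [hNk] at hD
    have hDc : coeff ((n-k)-1) (d⁄dX ℚ (S^n)) = coeff (n-k) (S^n) * ((n-k:ℕ):ℚ) := by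
      have hx : (n-k) - 1 + 1 = n-k := by omega
      rw [coeff_derivative, hx]
      congr 1
      have : (((n-k)-1:ℕ):ℚ) = ((n-k:ℕ):ℚ) - 1 := by
        rw [Nat.cast_sub (by omega : 1 ≤ n - k)]; norm_num
      rw [this]; ring
    rw [hDc] at hD
    have hcast : ((n-k:ℕ):ℚ) + (k:ℚ) = (n:ℚ) := by
      rw [← Nat.cast_add, hNk]
    rw [hcast] at hD
    have hCd : coeff ((n-k)-1) ((d⁄dX ℚ (S^k)) * S^(n-k))
        = (k:ℚ) * coeff (n-k) (S^n) * ((n-k:ℕ):ℚ) / (n:ℚ) := by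
      rw [eq_div_iff hn0]
      linear_combination hD
    rw [hCd]
    have key : ∀ (d : ℕ) (c kq nq : ℚ), (d:ℚ) ≠ 0 → nq ≠ 0 →
        (1/(d:ℚ)) * (kq * c * (d:ℚ) / nq) = kq/nq * c := by
      intros d c kq nq h1 h2
      field_simp
    exact key (n-k) _ _ _ hNne hn0

lemma coeff_T (S : ℚ⟦X⟧) (n : ℕ) :
    PowerSeries.coeff n (PowerSeries.mk (tcoef S))
      = coeff n (S^(n+1)) / (n+1) := by
  have h1 : coeff n (PowerSeries.mk (tcoef S))
      = coeff (n+1) ((X * PowerSeries.mk (tcoef S)) ^ 1) := by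
    rw [pow_one, coeff_succ_X_mul]
  rw [h1, coeff_B_pow S (n+1) 1 le_rfl (by omega)]
  have h2 : n + 1 - 1 = n := by omega
  rw [h2]
  push_cast
  ring



variable (s : ℕ → ℕ)

/-- fiber cardinality -/
def fib {α : Type} [Fintype α] [DecidableEq α] {q : ℕ} (f : α → Fin q) (i : Fin q) : ℕ :=
  (univ.filter fun j => f j = i).card

lemma Ia : ∀ (q : ℕ) (α : Type) [Fintype α] [DecidableEq α],
    (∑ f : α → Fin q, ∏ i : Fin q, (s (fib f i) : ℚ))
      = (Fintype.card α).factorial * coeff (Fintype.card α)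
          ((PowerSeries.mk fun m => (s m : ℚ) / (m.factorial : ℚ)) ^ q) := by
  intro q
  induction q with
  | zero =>
    intro α _ _
    rcases isEmpty_or_nonempty α with h | h
    · have hcard : Fintype.card α = 0 := Fintype.card_eq_zero
      rw [hcard]
      simp
    · have hcard : 0 < Fintype.card α := Fintype.card_pos
      have : IsEmpty (α → Fin 0) := by infer_instance
      rw [pow_zero]
      simp [coeff_one, Nat.pos_iff_ne_zero.mp hcard]
  | succ q IH =>
    intro α _ _
    -- group functions by the fiber of `Fin.last q`
    have hgroup : (∑ f : α → Fin (q+1), ∏ i : Fin (q+1), (s (fib f i) : ℚ))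
        = ∑ T : Finset α, ∑ f ∈ univ.filter
            (fun f : α → Fin (q+1) => univ.filter (fun a => f a = Fin.last q) = T),
            ∏ i : Fin (q+1), (s (fib f i) : ℚ) := by
      rw [sum_fiberwise_of_maps_to (fun f _ => mem_univ _)]
    rw [hgroup]
    -- inner sum for fixed T
    have hinner : ∀ T : Finset α,
        (∑ f ∈ univ.filter
            (fun f : α → Fin (q+1) => univ.filter (fun a => f a = Fin.last q) = T),
            ∏ i : Fin (q+1), (s (fib f i) : ℚ))
        = (s T.card : ℚ) * ∑ g : {a // a ∈ (Tᶜ : Finset α)} → Fin q,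
            ∏ i : Fin q, (s (fib g i) : ℚ) := by
      intro T
      rw [mul_sum]
      refine sum_bij'
        (i := fun f hf => fun x : {a // a ∈ (Tᶜ : Finset α)} =>
          Fin.castPred (f x.1) (by
            rw [mem_filter] at hf
            intro hlast
            have hxT : x.1 ∉ T := by have h2 := x.2; rwa [mem_compl] at h2
            have hmem : (x.1 : α) ∈ univ.filter (fun a => f a = Fin.last q) :=
              mem_filter.mpr ⟨mem_univ _, hlast⟩
            rw [hf.2] at hmem
            exact hxT hmem))
        (j := fun g _ => fun a : α =>
          if h : a ∈ T then Fin.last q else Fin.castSucc (g ⟨a, by rwa [mem_compl]⟩))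
        ?_ ?_ ?_ ?_ ?_
      · intro f hf
        exact mem_univ _
      · -- hj : up g ∈ filter
        intro g hg
        refine mem_filter.mpr ⟨mem_univ _, ?_⟩
        ext a
        rw [mem_filter]
        constructor
        · rintro ⟨-, ha⟩
          by_contra hna
          simp only [dif_neg hna] at ha
          exact absurd ha (Fin.castSucc_lt_last _).ne
        · intro ha
          exact ⟨mem_univ _, by simp only [dif_pos ha]⟩
      · -- left_inv : j (i f) = f
        intro f hf
        dsimp only
        funext a
        rw [mem_filter] at hf
        by_cases ha : a ∈ T
        · rw [dif_pos ha]
          have hmem : a ∈ univ.filter (fun b => f b = Fin.last q) := by rw [hf.2]; exact ha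
          rw [mem_filter] at hmem
          exact hmem.2.symm
        · rw [dif_neg ha]
          exact Fin.castSucc_castPred _ _
      · -- right_inv : i (j g) = g
        intro g hg
        dsimp only
        funext x
        have hx : x.1 ∉ T := by have := x.2; rwa [mem_compl] at this
        simp only [dif_neg hx]
        apply Fin.castPred_castSucc
      · -- weights
        intro f hf
        rw [mem_filter] at hf
        have h1 : (s (fib f (Fin.last q)) : ℚ) = (s T.card : ℚ) := by
          simp only [fib]
          rw [hf.2]
        rw [Fin.prod_univ_castSucc, h1, mul_comm]
        congr 1
        refine Finset.prod_congr rfl ?_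
        intro i _
        congr 1
        congr 1
        simp only [fib]
        refine card_bij' (i := fun a ha => (⟨a, by
            rw [mem_compl]
            intro haT
            rw [mem_filter] at ha
            have hmem : a ∈ univ.filter (fun b => f b = Fin.last q) := by rw [hf.2]; exact haT
            rw [mem_filter] at hmem
            rw [ha.2] at hmem
            exact absurd hmem.2 (Fin.castSucc_lt_last _).ne⟩ :
              {a // a ∈ (Tᶜ : Finset α)}))
          (j := fun x hx => x.1) ?_ ?_ ?_ ?_
        · intro a ha
          rw [mem_filter] at ha ⊢
          refine ⟨mem_univ _, ?_⟩
          rw [Fin.castPred_eq_iff_eq_castSucc]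
          exact ha.2
        · intro x hx
          rw [mem_filter] at hx ⊢
          refine ⟨mem_univ _, ?_⟩
          rw [Fin.castPred_eq_iff_eq_castSucc] at hx
          exact hx.2
        · intro a ha
          rfl
        · intro x hx
          rfl
    rw [sum_congr rfl (fun T _ => hinner T)]
    -- use IH and reduce to a sum over subset sizes
    have hcompl : ∀ T : Finset α,
        (∑ g : {a // a ∈ (Tᶜ : Finset α)} → Fin q, ∏ i : Fin q, (s (fib g i) : ℚ))
        = ((Fintype.card α - T.card).factorial : ℚ) * coeff (Fintype.card α - T.card)
            ((PowerSeries.mk fun m => (s m : ℚ) / (m.factorial : ℚ)) ^ q) := by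
      intro T
      have hcc : Fintype.card {a // a ∈ (Tᶜ : Finset α)} = Fintype.card α - T.card := by
        rw [Fintype.card_coe, card_compl]
      rw [IH, hcc]
    rw [sum_congr rfl (fun T _ => by rw [hcompl T])]
    -- group by card
    rw [← Finset.powerset_univ]
    rw [Finset.sum_powerset_apply_card
      (f := fun j => (s j : ℚ) * (((Fintype.card α - j).factorial : ℚ)
        * coeff (Fintype.card α - j)
          ((PowerSeries.mk fun m => (s m : ℚ) / (m.factorial : ℚ)) ^ q)))
      (x := (univ : Finset α))]
    rw [card_univ]
    -- expand the RHS coefficient of S^(q+1)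
    rw [pow_succ', coeff_mul, Finset.Nat.sum_antidiagonal_eq_sum_range_succ_mk, mul_sum]
    apply sum_congr rfl
    intro j hj
    rw [mem_range] at hj
    have hjn : j ≤ Fintype.card α := by omega
    have hfac : ((Fintype.card α).choose j : ℚ)
        = ((Fintype.card α).factorial : ℚ) / (j.factorial * (Fintype.card α - j).factorial) :=
      Nat.cast_choose ℚ hjn
    rw [nsmul_eq_mul, hfac, coeff_mk]
    have hjf : (j.factorial : ℚ) ≠ 0 := Nat.cast_ne_zero.mpr (Nat.factorial_ne_zero j)
    have hnjf : ((Fintype.card α - j).factorial : ℚ) ≠ 0 :=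
      Nat.cast_ne_zero.mpr (Nat.factorial_ne_zero _)
    field_simp

section Cycle

variable {n : ℕ}
open Fin.NatCast

/-- the `Good` predicate on `Fin n → Fin (n+1)`, mirroring `IsParkingFunction` -/
def GoodF (g : Fin n → Fin (n+1)) : Prop :=
  ∀ k ∈ Finset.Icc 1 n, k ≤ (univ.filter fun i => (g i : ℕ) + 1 ≤ k).card

instance : DecidablePred (GoodF (n := n)) := fun g => by
  unfold GoodF; infer_instance

lemma sum_fib (f : Fin n → Fin (n+1)) : ∑ i : Fin (n+1), fib f i = n := by
  have h := Finset.card_eq_sum_card_fiberwise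
    (s := (univ : Finset (Fin n))) (t := (univ : Finset (Fin (n+1)))) (f := f)
    (fun x _ => mem_univ _)
  rw [card_univ, Fintype.card_fin] at h
  simp only [fib]
  exact h.symm

/-- periodically extended fiber counts -/
def hfn (f : Fin n → Fin (n+1)) : ℕ → ℕ := fun j => fib f ((j : ℕ) : Fin (n+1))

def Hs (f : Fin n → Fin (n+1)) : ℕ → ℕ := fun m => ∑ j ∈ range m, hfn f j

def Jf (f : Fin n → Fin (n+1)) : ℕ → ℤ := fun m => (Hs f m : ℤ) - m

lemma hfn_period (f : Fin n → Fin (n+1)) (j : ℕ) : hfn f (j + (n+1)) = hfn f j := by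
  unfold hfn
  congr 1
  rw [Nat.cast_add, Fin.natCast_self, add_zero]

lemma Hs_succ (f : Fin n → Fin (n+1)) (m : ℕ) : Hs f (m+1) = Hs f m + hfn f m :=
  sum_range_succ _ _

lemma Hs_total (f : Fin n → Fin (n+1)) : Hs f (n+1) = n := by
  have h2 : (∑ j ∈ range (n+1), hfn f j) = ∑ i : Fin (n+1), fib f i := by
    rw [← Fin.sum_univ_eq_sum_range (fun j => hfn f j) (n+1)]
    apply Fintype.sum_congr
    intro i
    unfold hfn
    rw [Fin.cast_val_eq_self]
  exact h2.trans (sum_fib f)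

lemma Hs_period (f : Fin n → Fin (n+1)) : ∀ m, Hs f (m + (n+1)) = Hs f m + n := by
  intro m
  induction m with
  | zero =>
    rw [Nat.zero_add, Hs_total]
    simp [Hs]
  | succ m IH =>
    have h1 : m + 1 + (n+1) = (m + (n+1)) + 1 := by omega
    rw [h1, Hs_succ, IH, hfn_period, Hs_succ]
    omega

lemma Jf_period (f : Fin n → Fin (n+1)) (m : ℕ) : Jf f (m + (n+1)) = Jf f m - 1 := by
  unfold Jf
  rw [Hs_period]
  push_cast
  ring

lemma Hs_add (f : Fin n → Fin (n+1)) (p k : ℕ) :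
    Hs f (p + k) = Hs f p + ∑ j ∈ range k, hfn f (p + j) := by
  induction k with
  | zero => simp
  | succ k IH =>
    have h1 : p + (k+1) = (p+k)+1 := by omega
    rw [h1, Hs_succ, IH, sum_range_succ]
    omega

lemma fib_shift (f : Fin n → Fin (n+1)) (c i : Fin (n+1)) :
    fib (fun x => f x + c) i = fib f (i - c) := by
  unfold fib
  congr 1
  apply filter_congr
  intro x _
  simp only [eq_sub_iff_add_eq]

lemma wgt_shift (s : ℕ → ℕ) (f : Fin n → Fin (n+1)) (c : Fin (n+1)) :
    (∏ i : Fin (n+1), s (fib (fun x => f x + c) i)) = ∏ i : Fin (n+1), s (fib f i) := by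
  calc (∏ i : Fin (n+1), s (fib (fun x => f x + c) i))
      = ∏ i : Fin (n+1), s (fib f ((Equiv.subRight c) i)) := by
        apply Fintype.prod_congr
        intro i
        rw [fib_shift]
        rfl
  _ = ∏ i : Fin (n+1), s (fib f i) := Equiv.prod_comp (Equiv.subRight c) (fun x => s (fib f x))

lemma count_lt (g : Fin n → Fin (n+1)) {k : ℕ} (hk : k ≤ n+1) :
    (univ.filter fun i => (g i : ℕ) < k).card
      = ∑ j ∈ range k, fib g ((j : ℕ) : Fin (n+1)) := by
  rw [Finset.card_eq_sum_card_fiberwise (f := fun i => (g i : ℕ)) (t := range k)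
    (fun i hi => by simpa using hi)]
  apply sum_congr rfl
  intro j hj
  rw [mem_range] at hj
  rw [filter_filter]
  unfold fib
  congr 1
  apply filter_congr
  intro i _
  constructor
  · rintro ⟨-, hj2⟩
    rw [Fin.ext_iff, Fin.val_natCast, Nat.mod_eq_of_lt (by omega)]
    exact hj2
  · intro h2
    rw [Fin.ext_iff, Fin.val_natCast, Nat.mod_eq_of_lt (by omega)] at h2
    exact ⟨by omega, h2⟩

lemma good_iff (f : Fin n → Fin (n+1)) (p : ℕ) :
    GoodF (fun i => f i - ((p : ℕ) : Fin (n+1)))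
      ↔ ∀ k ∈ Finset.Icc 1 n, Jf f p ≤ Jf f (p + k) := by
  simp only [GoodF]
  apply forall₂_congr
  intro k hk
  rw [mem_Icc] at hk
  have h1 : (univ.filter fun i => (((f i - ((p:ℕ) : Fin (n+1))) : Fin (n+1)) : ℕ) + 1 ≤ k).card
      = ∑ j ∈ range k, hfn f (p + j) := by
    have e1 : (univ.filter fun i => (((f i - ((p:ℕ) : Fin (n+1))) : Fin (n+1)) : ℕ) + 1 ≤ k)
        = (univ.filter fun i =>
            ((((fun x => f x + (-((p:ℕ) : Fin (n+1)))) i : Fin (n+1))) : ℕ) < k) := by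
      apply filter_congr
      intro i _
      simp only [sub_eq_add_neg]
      omega
    rw [e1, count_lt _ (by omega)]
    apply sum_congr rfl
    intro j hj
    rw [fib_shift]
    unfold hfn
    congr 1
    push_cast
    abel
  rw [h1]
  have h3 : (Jf f (p+k) - Jf f p) = ((∑ j ∈ range k, hfn f (p+j) : ℕ) : ℤ) - k := by
    unfold Jf
    rw [Hs_add f p k, Nat.cast_add, Nat.cast_add p k]
    ring
  omega

lemma exists_good_shift (f : Fin n → Fin (n+1)) :
    ∃ c : Fin (n+1), GoodF (fun i => f i + c) := by
  classical
  have hex : ∃ m, m ≤ n ∧ ∀ m' ≤ n, Jf f m ≤ Jf f m' := by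
    obtain ⟨m0, hm0mem, hm0min⟩ := Finset.exists_min_image (range (n+1)) (Jf f)
      ⟨0, mem_range.2 (by omega)⟩
    rw [mem_range] at hm0mem
    exact ⟨m0, by omega, fun m' hm' => hm0min m' (mem_range.2 (by omega))⟩
  have hp := Nat.find_spec hex
  set p := Nat.find hex with hpdef
  have hpmin : ∀ m < p, ¬ (m ≤ n ∧ ∀ m' ≤ n, Jf f m ≤ Jf f m') :=
    fun m hm => Nat.find_min hex hm
  refine ⟨-((p:ℕ) : Fin (n+1)), ?_⟩
  have he : (fun i => f i + -((p:ℕ) : Fin (n+1)))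
      = fun i => f i - ((p:ℕ) : Fin (n+1)) := funext fun i => (sub_eq_add_neg _ _).symm
  rw [he, good_iff]
  intro k hk
  rw [mem_Icc] at hk
  by_cases hcase : p + k ≤ n
  · exact hp.2 _ hcase
  · have hm'lt : p + k - (n+1) < p := by omega
    have hrew : p + k = (p + k - (n+1)) + (n+1) := by omega
    rw [hrew, Jf_period]
    have hnotmin := hpmin _ hm'lt
    push_neg at hnotmin
    obtain ⟨m'', hm''n, hlt⟩ := hnotmin (by omega)
    have h2 := hp.2 m'' hm''n
    omega

lemma good_shift_unique_aux (f : Fin n → Fin (n+1)) {p p' : ℕ}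
    (hp'n : p' ≤ n) (hpp' : p < p')
    (hgp : ∀ k ∈ Finset.Icc 1 n, Jf f p ≤ Jf f (p + k))
    (hgp' : ∀ k ∈ Finset.Icc 1 n, Jf f p' ≤ Jf f (p' + k)) : False := by
  have h1 : Jf f p ≤ Jf f p' := by
    have h := hgp (p' - p) (mem_Icc.2 ⟨by omega, by omega⟩)
    rwa [show p + (p' - p) = p' by omega] at h
  have h2 : Jf f p' ≤ Jf f (p + (n+1)) := by
    have h := hgp' (p + (n+1) - p') (mem_Icc.2 ⟨by omega, by omega⟩)
    rwa [show p' + (p + (n+1) - p') = p + (n+1) by omega] at h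
  rw [Jf_period] at h2
  omega

lemma good_shift_unique (f : Fin n → Fin (n+1)) (c c' : Fin (n+1))
    (h : GoodF (fun i => f i + c)) (h' : GoodF (fun i => f i + c')) : c = c' := by
  have hcp : (fun i => f i + c) = fun i => f i - ((((-c : Fin (n+1)) : ℕ)) : Fin (n+1)) := by
    funext i
    rw [Fin.cast_val_eq_self, sub_neg_eq_add]
  have hcp' : (fun i => f i + c') = fun i => f i - ((((-c' : Fin (n+1)) : ℕ)) : Fin (n+1)) := by
    funext i
    rw [Fin.cast_val_eq_self, sub_neg_eq_add]
  rw [hcp, good_iff] at h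
  rw [hcp', good_iff] at h'
  by_contra hne
  have hvne : ((-c : Fin (n+1)) : ℕ) ≠ ((-c' : Fin (n+1)) : ℕ) := by
    intro hv
    apply hne
    have := congrArg (fun m : ℕ => (m : Fin (n+1))) hv
    simp only [Fin.cast_val_eq_self] at this
    exact neg_inj.mp this
  have hcn : ((-c : Fin (n+1)) : ℕ) ≤ n := by omega
  have hcn' : ((-c' : Fin (n+1)) : ℕ) ≤ n := by
    have := (-c' : Fin (n+1)).isLt
    omega
  rcases Nat.lt_or_ge ((-c : Fin (n+1)) : ℕ) ((-c' : Fin (n+1)) : ℕ) with hlt | hge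
  · exact good_shift_unique_aux f hcn' hlt h h'
  · exact good_shift_unique_aux f hcn (by omega) h' h

lemma good_lt (g : Fin n → Fin (n+1)) (hg : GoodF g) (i : Fin n) : (g i : ℕ) < n := by
  have hn : 1 ≤ n := i.pos
  have h := hg n (mem_Icc.2 ⟨hn, le_rfl⟩)
  have huniv : (univ.filter fun j => (g j : ℕ) + 1 ≤ n) = univ := by
    apply eq_univ_of_card
    refine le_antisymm ?_ ?_
    · rw [← card_univ]
      exact card_le_univ _
    · rwa [Fintype.card_fin]
  have hmem : i ∈ univ.filter fun j => (g j : ℕ) + 1 ≤ n := by rw [huniv]; exact mem_univ i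
  rw [mem_filter] at hmem
  omega

lemma good_sum (s : ℕ → ℕ) :
    (∑ g ∈ univ.filter (GoodF (n := n)), ∏ i : Fin (n+1), s (fib g i)) = aCount s n := by
  unfold aCount
  rw [← Finset.sum_subtype (univ.filter (IsParkingFunction n))
    (fun f => by simp) (fun f => ∏ i : Fin n, s (fiberCard n f i)), mul_sum]
  refine sum_bij'
    (i := fun g hg => (fun i : Fin n =>
      (⟨(g i : ℕ), good_lt g (mem_filter.mp hg).2 i⟩ : Fin n)))
    (j := fun f _ => (fun i : Fin n => Fin.castSucc (f i))) ?_ ?_ ?_ ?_ ?_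
  · intro g hg
    rw [mem_filter]
    exact ⟨mem_univ _, (mem_filter.mp hg).2⟩
  · intro f hf
    rw [mem_filter]
    exact ⟨mem_univ _, (mem_filter.mp hf).2⟩
  · intro g hg
    funext i
    rfl
  · intro f hf
    funext i
    rfl
  · intro g hg
    have h0 : fib g (Fin.last n) = 0 := by
      unfold fib
      rw [card_eq_zero, filter_eq_empty_iff]
      intro j _
      intro he
      have hlt := good_lt g (mem_filter.mp hg).2 j
      rw [he] at hlt
      simp at hlt
    rw [Fin.prod_univ_castSucc, h0, mul_comm]
    congr 1
    apply Finset.prod_congr rfl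
    intro i _
    congr 1
    unfold fib fiberCard
    congr 1
    apply filter_congr
    intro j _
    constructor
    · intro h
      apply Fin.ext
      have := congrArg Fin.val h
      simpa using this
    · intro h
      apply Fin.ext
      have := congrArg Fin.val h
      simpa using this

lemma Ib (s : ℕ → ℕ) (n : ℕ) :
    (∑ f : Fin n → Fin (n+1), ∏ i : Fin (n+1), s (fib f i)) = (n+1) * aCount s n := by
  classical
  have key : (∑ f : Fin n → Fin (n+1), ∏ i : Fin (n+1), s (fib f i))
      = ∑ x ∈ (univ.filter (GoodF (n := n))) ×ˢ (univ : Finset (Fin (n+1))),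
          ∏ i : Fin (n+1), s (fib x.1 i) := by
    refine sum_nbij'
      (i := fun f => ((fun x => f x + (exists_good_shift f).choose : Fin n → Fin (n+1)),
        -(exists_good_shift f).choose))
      (j := fun x => fun y => x.1 y + x.2) ?_ ?_ ?_ ?_ ?_
    · intro f _
      rw [mem_product]
      exact ⟨mem_filter.mpr ⟨mem_univ _, (exists_good_shift f).choose_spec⟩, mem_univ _⟩
    · intro x _
      exact mem_univ _
    · intro f _
      funext y
      dsimp only
      rw [add_neg_cancel_right]
    · intro x hx
      rw [mem_product, mem_filter] at hx
      set f := fun y => x.1 y + x.2 with hfdef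
      have hgx : GoodF (fun y => f y + (-x.2)) := by
        have he : (fun y => f y + (-x.2)) = x.1 := by
          funext y
          rw [hfdef]
          dsimp only
          rw [add_neg_cancel_right]
        rw [he]
        exact hx.1.2
      have huniq := good_shift_unique f (exists_good_shift f).choose (-x.2)
        (exists_good_shift f).choose_spec hgx
      have h1 : (fun y => f y + (exists_good_shift f).choose) = x.1 := by
        funext y
        rw [huniq, hfdef]
        dsimp only
        rw [add_neg_cancel_right]
      have h2 : -(exists_good_shift f).choose = x.2 := by rw [huniq, neg_neg]
      exact Prod.ext h1 h2
    · intro f _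
      dsimp only
      exact (wgt_shift s f (exists_good_shift f).choose).symm
  rw [key, Finset.sum_product]
  have hconst : ∀ g ∈ univ.filter (GoodF (n := n)),
      (∑ _c : Fin (n+1), ∏ i : Fin (n+1), s (fib g i))
        = (n+1) * ∏ i : Fin (n+1), s (fib g i) := by
    intro g _
    rw [sum_const, card_univ, Fintype.card_fin, nsmul_eq_mul, Nat.cast_id]
  rw [sum_congr rfl hconst, ← mul_sum, good_sum]

end Cycle

end PL

/-- With `A(t) = Σ a(n) t^n/n!` and `S(t) = Σ s(m) t^m/m!`, we have
`A(t) = S(t · A(t))` in `ℚ⟦t⟧`. -/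
theorem parkingLikeEGF_eq_comp (s : ℕ → ℕ) :
    (PowerSeries.mk fun n => (aCount s n : ℚ) / (n.factorial : ℚ)) =
      seriesComp (PowerSeries.mk fun m => (s m : ℚ) / (m.factorial : ℚ))
        (PowerSeries.X *
          PowerSeries.mk fun n => (aCount s n : ℚ) / (n.factorial : ℚ)) := by
  have hA : (PowerSeries.mk fun n => (aCount s n : ℚ) / (n.factorial : ℚ))
      = PowerSeries.mk (PL.tcoef (PowerSeries.mk fun m => (s m : ℚ) / (m.factorial : ℚ))) := by
    ext n
    rw [PowerSeries.coeff_mk, PL.coeff_T]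
    have h1 := PL.Ia s (n+1) (Fin n)
    rw [Fintype.card_fin] at h1
    have h2' : (∑ f : Fin n → Fin (n+1), ∏ i : Fin (n+1), (s (PL.fib f i) : ℚ))
        = ((n:ℚ)+1) * aCount s n := by
      have h2 := congrArg (fun m : ℕ => (m : ℚ)) (PL.Ib s n)
      push_cast at h2
      exact h2
    have h3 : ((n:ℚ)+1) * aCount s n
        = (n.factorial : ℚ) * PowerSeries.coeff n
            ((PowerSeries.mk fun m => (s m : ℚ) / (m.factorial : ℚ)) ^ (n+1)) := by
      rw [← h2', h1]
    have hfne : (n.factorial : ℚ) ≠ 0 := Nat.cast_ne_zero.mpr (Nat.factorial_ne_zero n)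
    have hn1 : ((n:ℚ)+1) ≠ 0 := by positivity
    rw [div_eq_div_iff hfne (by exact_mod_cast hn1)]
    linear_combination h3
  rw [hA]
  exact PL.Tfun_eq _
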